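/- For every n ≥ 2 there is no permutation π of I_n = {0,…,2^n−1} induced by an automorphism of the rooted binary tree — that is, no permutation π such that for all c, d ∈ I_n and all 0 ≤ m ≤ n, if the binary expansions of c and d agree in their first m digits then the binary expansions of π(c) and π(d) agree in their first m digits — whose permutation matrix P_π (with P_π e_j = e_{π(j)}) satisfies P_πᵀ M_B^{(n)} P_π = M_L^{(n)}. -/

import Mathlib

open Matrix

/-- Equivalence identifying `Fin (2^n) ⊕ Fin (2^n)` with `Fin (2^(n+1))`. -/
def blockEquiv (n : ℕ) : Fin (2 ^ n) ⊕ Fin (2 ^ n) ≃ Fin (2 ^ (n + 1)) :=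
  finSumFinEquiv.trans (finCongr (by rw [pow_succ, mul_two]))

/-- Assemble a `2^(n+1) × 2^(n+1)` matrix from four `2^n × 2^n` blocks. -/
noncomputable def mkBlock {n : ℕ} (A B C D : Matrix (Fin (2 ^ n)) (Fin (2 ^ n)) ℝ) :
    Matrix (Fin (2 ^ (n + 1))) (Fin (2 ^ (n + 1))) ℝ :=
  Matrix.reindex (blockEquiv n) (blockEquiv n) (Matrix.fromBlocks A B C D)

/-- The pair of BBS translation generators. -/
noncomputable def abB : (n : ℕ) →
    Matrix (Fin (2 ^ n)) (Fin (2 ^ n)) ℝ × Matrix (Fin (2 ^ n)) (Fin (2 ^ n)) ℝ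
  | 0 => (1, 1)
  | n + 1 => (mkBlock (abB n).1 (abB n).2 0 0, mkBlock 0 0 (abB n).1 (abB n).2)

noncomputable def aB (n : ℕ) : Matrix (Fin (2 ^ n)) (Fin (2 ^ n)) ℝ := (abB n).1
noncomputable def bB (n : ℕ) : Matrix (Fin (2 ^ n)) (Fin (2 ^ n)) ℝ := (abB n).2

/-- The pair of lamplighter generators. -/
noncomputable def abL : (n : ℕ) →
    Matrix (Fin (2 ^ n)) (Fin (2 ^ n)) ℝ × Matrix (Fin (2 ^ n)) (Fin (2 ^ n)) ℝ
  | 0 => (1, 1)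
  | n + 1 => (mkBlock 0 (abL n).2 (abL n).1 0, mkBlock (abL n).1 0 0 (abL n).2)

noncomputable def aL (n : ℕ) : Matrix (Fin (2 ^ n)) (Fin (2 ^ n)) ℝ := (abL n).1
noncomputable def bL (n : ℕ) : Matrix (Fin (2 ^ n)) (Fin (2 ^ n)) ℝ := (abL n).2

/-- The BBS translation transition operator. -/
noncomputable def MB (n : ℕ) : Matrix (Fin (2 ^ n)) (Fin (2 ^ n)) ℝ :=
  (1 / 4 : ℝ) • (aB n + (aB n)ᵀ + bB n + (bB n)ᵀ)

/-- The lamplighter transition operator. -/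
noncomputable def ML (n : ℕ) : Matrix (Fin (2 ^ n)) (Fin (2 ^ n)) ℝ :=
  (1 / 4 : ℝ) • (aL n + (aL n)ᵀ + bL n + (bL n)ᵀ)

/-- The `j`-th binary digit (`1 ≤ j ≤ n`, most significant first) of `c ∈ {0, …, 2ⁿ−1}`:
`c = Σ_{j=1}^n c_j 2^{n−j}`. -/
def digit (n c j : ℕ) : ℕ := c / 2 ^ (n - j) % 2

/-- The permutation matrix `P_π` with `P_π e_j = e_{π j}`. -/
noncomputable def permMatrix {N : ℕ} (π : Equiv.Perm (Fin N)) : Matrix (Fin N) (Fin N) ℝ :=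
  Matrix.of fun i j => if i = π j then (1 : ℝ) else 0

/-- `π` is induced by an automorphism of the rooted binary tree: whenever the binary
expansions of `c` and `d` agree in their first `m` digits, so do those of `π c` and
`π d`. -/
def IsTreeAut (n : ℕ) (π : Equiv.Perm (Fin (2 ^ n))) : Prop :=
  ∀ c d : Fin (2 ^ n), ∀ m ≤ n,
    (∀ j, 1 ≤ j → j ≤ m → digit n (c : ℕ) j = digit n (d : ℕ) j) →
    ∀ j, 1 ≤ j → j ≤ m → digit n ((π c : Fin (2 ^ n)) : ℕ) j = digit n ((π d : Fin (2 ^ n)) : ℕ) j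

lemma mkBlock_apply {n : ℕ} (A B C D : Matrix (Fin (2 ^ n)) (Fin (2 ^ n)) ℝ)
    (u v : Fin (2 ^ n) ⊕ Fin (2 ^ n)) :
    mkBlock A B C D (blockEquiv n u) (blockEquiv n v) = Matrix.fromBlocks A B C D u v := by
  simp [mkBlock]

lemma blockEquiv_inl (n : ℕ) (i : Fin (2 ^ n)) :
    ((blockEquiv n (Sum.inl i) : Fin (2 ^ (n+1))) : ℕ) = (i : ℕ) := by
  simp [blockEquiv]

lemma blockEquiv_inr (n : ℕ) (i : Fin (2 ^ n)) :
    ((blockEquiv n (Sum.inr i) : Fin (2 ^ (n+1))) : ℕ) = 2 ^ n + (i : ℕ) := by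
  simp [blockEquiv]; omega

lemma aB_succ (n : ℕ) : aB (n+1) = mkBlock (aB n) (bB n) 0 0 := rfl
lemma bB_succ (n : ℕ) : bB (n+1) = mkBlock 0 0 (aB n) (bB n) := rfl
lemma aL_succ (n : ℕ) : aL (n+1) = mkBlock 0 (bL n) (aL n) 0 := rfl
lemma bL_succ (n : ℕ) : bL (n+1) = mkBlock (aL n) 0 0 (bL n) := rfl

lemma aB_diag : ∀ (n : ℕ) (c : Fin (2 ^ n)),
    aB n c c = if (c : ℕ) = 0 then 1 else 0
  | 0, c => by
    have hc : (c : ℕ) = 0 := by have := c.isLt; simp at this; omega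
    simp [aB, abB, hc, Matrix.one_apply_eq]
  | n + 1, c => by
    obtain ⟨u, rfl⟩ : ∃ u, blockEquiv n u = c := ⟨_, (blockEquiv n).apply_symm_apply c⟩
    rw [aB_succ, mkBlock_apply]
    rcases u with i | i
    · rw [blockEquiv_inl]
      simpa using aB_diag n i
    · rw [blockEquiv_inr]
      have : 0 < 2 ^ n := Nat.pow_pos (by norm_num)
      have : ¬ (2 ^ n + (i:ℕ) = 0) := by omega
      simp [Matrix.fromBlocks, this]

lemma bB_diag : ∀ (n : ℕ) (c : Fin (2 ^ n)),
    bB n c c = if (c : ℕ) = 2 ^ n - 1 then 1 else 0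
  | 0, c => by
    have hc : (c : ℕ) = 0 := by have := c.isLt; simp at this; omega
    simp [bB, abB, hc, Matrix.one_apply_eq]
  | n + 1, c => by
    obtain ⟨u, rfl⟩ : ∃ u, blockEquiv n u = c := ⟨_, (blockEquiv n).apply_symm_apply c⟩
    rw [bB_succ, mkBlock_apply]
    have h2 : 0 < 2 ^ n := Nat.pow_pos (by norm_num)
    have h2' : 2 ^ (n + 1) = 2 * 2 ^ n := by rw [pow_succ]; ring
    rcases u with i | i
    · rw [blockEquiv_inl]
      have hi : (i : ℕ) < 2 ^ n := i.isLt
      have : ¬ ((i : ℕ) = 2 ^ (n+1) - 1) := by omega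
      simp [Matrix.fromBlocks, this]
    · rw [blockEquiv_inr]
      have hcond : (2 ^ n + (i : ℕ) = 2 ^ (n+1) - 1) ↔ ((i : ℕ) = 2 ^ n - 1) := by omega
      rw [show Matrix.fromBlocks 0 0 (aB n) (bB n) (Sum.inr i) (Sum.inr i) = bB n i i from rfl,
        bB_diag n i]
      simp only [hcond]

lemma aL_diag_succ (n : ℕ) (c : Fin (2 ^ (n+1))) : aL (n+1) c c = 0 := by
  obtain ⟨u, rfl⟩ : ∃ u, blockEquiv n u = c := ⟨_, (blockEquiv n).apply_symm_apply c⟩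
  rw [aL_succ, mkBlock_apply]
  rcases u with i | i <;> simp [Matrix.fromBlocks]

lemma bL_diag : ∀ (n : ℕ) (c : Fin (2 ^ n)),
    bL n c c = if 2 ^ n ≤ (c : ℕ) + 2 then 1 else 0
  | 0, c => by
    have hc : (c : ℕ) = 0 := by have := c.isLt; simp at this; omega
    simp [bL, abL, hc, Matrix.one_apply_eq]
  | n + 1, c => by
    obtain ⟨u, rfl⟩ : ∃ u, blockEquiv n u = c := ⟨_, (blockEquiv n).apply_symm_apply c⟩
    rw [bL_succ, mkBlock_apply]
    have h2' : 2 ^ (n + 1) = 2 * 2 ^ n := by rw [pow_succ]; ring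
    rcases u with i | i
    · rw [blockEquiv_inl]
      rw [show Matrix.fromBlocks (aL n) 0 0 (bL n) (Sum.inl i) (Sum.inl i) = aL n i i from rfl]
      match n with
      | 0 =>
        have hi : (i : ℕ) = 0 := by have := i.isLt; simp at this; omega
        simp [aL, abL, hi, Matrix.one_apply_eq]
      | m + 1 =>
        rw [aL_diag_succ]
        have h2 : 2 ≤ 2 ^ (m + 1) := by
          calc 2 = 2 ^ 1 := rfl
          _ ≤ 2 ^ (m+1) := Nat.pow_le_pow_right (by norm_num) (by omega)
        have hi : (i : ℕ) < 2 ^ (m+1) := i.isLt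
        have : ¬ (2 ^ (m + 1 + 1) ≤ (i : ℕ) + 2) := by
          rw [show 2 ^ (m+1+1) = 2 * 2 ^ (m+1) from by rw [pow_succ]; ring]
          omega
        simp [this]
    · rw [blockEquiv_inr]
      rw [show Matrix.fromBlocks (aL n) 0 0 (bL n) (Sum.inr i) (Sum.inr i) = bL n i i from rfl,
        bL_diag n i]
      have hcond : (2 ^ (n+1) ≤ 2 ^ n + (i : ℕ) + 2) ↔ (2 ^ n ≤ (i : ℕ) + 2) := by omega
      simp only [hcond]

lemma conj_apply {N : ℕ} (π : Equiv.Perm (Fin N)) (M : Matrix (Fin N) (Fin N) ℝ)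
    (i j : Fin N) :
    ((permMatrix π)ᵀ * M * (permMatrix π)) i j = M (π i) (π j) := by
  simp only [Matrix.mul_apply, Matrix.transpose_apply, permMatrix, Matrix.of_apply]
  simp [ite_mul, mul_ite, Finset.sum_ite_eq', Finset.sum_ite_eq]

/-- For `n ≥ 2`, no permutation of `{0, …, 2ⁿ−1}` induced by an
automorphism of the rooted binary tree conjugates `M_B⁽ⁿ⁾` into `M_L⁽ⁿ⁾`. -/
theorem no_tree_automorphism_conjugation (n : ℕ) (hn : 2 ≤ n) :
    ¬ ∃ π : Equiv.Perm (Fin (2 ^ n)), IsTreeAut n π ∧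
        (permMatrix π)ᵀ * MB n * permMatrix π = ML n := by
  rintro ⟨π, hT, hconj⟩
  have h4 : 4 ≤ 2 ^ n := by
    calc (4 : ℕ) = 2 ^ 2 := rfl
    _ ≤ 2 ^ n := Nat.pow_le_pow_right (by norm_num) hn
  -- the two special indices
  set c₀ : Fin (2 ^ n) := ⟨2 ^ n - 2, by omega⟩ with hc₀
  set c₁ : Fin (2 ^ n) := ⟨2 ^ n - 1, by omega⟩ with hc₁
  -- ML diagonal at c₀, c₁ equals 1/2
  have hMLdiag : ∀ c : Fin (2 ^ n), 2 ^ n ≤ (c : ℕ) + 2 → ML n c c = 1 / 2 := by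
    intro c hc
    obtain ⟨m, rfl⟩ : ∃ m, n = m + 1 := ⟨n - 1, by omega⟩
    simp only [ML, Matrix.smul_apply, Matrix.add_apply, Matrix.transpose_apply]
    rw [aL_diag_succ, bL_diag]
    simp [hc]
    norm_num
  -- MB diagonal characterisation
  have hMBdiag : ∀ c : Fin (2 ^ n), MB n c c = 1 / 2 → (c : ℕ) = 0 ∨ (c : ℕ) = 2 ^ n - 1 := by
    intro c hc
    simp only [MB, Matrix.smul_apply, Matrix.add_apply, Matrix.transpose_apply] at hc
    rw [aB_diag, bB_diag] at hc
    by_contra hcon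
    push_neg at hcon
    simp [hcon.1, hcon.2] at hc
  -- conjugation gives diagonal transfer
  have htrans : ∀ c : Fin (2 ^ n), MB n (π c) (π c) = ML n c c := by
    intro c
    rw [← hconj, conj_apply]
  have h0 : (π c₀ : ℕ) = 0 ∨ (π c₀ : ℕ) = 2 ^ n - 1 := by
    apply hMBdiag
    rw [htrans]
    apply hMLdiag
    simp [hc₀]; omega
  have h1 : (π c₁ : ℕ) = 0 ∨ (π c₁ : ℕ) = 2 ^ n - 1 := by
    apply hMBdiag
    rw [htrans]
    apply hMLdiag
    simp [hc₁]; omega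
  have hne : (π c₀ : ℕ) ≠ (π c₁ : ℕ) := by
    intro h
    have : π c₀ = π c₁ := Fin.ext h
    have : c₀ = c₁ := π.injective this
    rw [hc₀, hc₁] at this
    have := Fin.mk.injEq (2^n-2) _ (2^n-1) _ ▸ this
    omega
  -- tree automorphism: first digits of π c₀ and π c₁ agree
  have hpow : 2 ^ n = 2 * 2 ^ (n - 1) := by
    rw [← pow_succ']
    congr 1
    omega
  have h2n1 : 2 ≤ 2 ^ (n - 1) := by
    calc (2:ℕ) = 2 ^ 1 := rfl
    _ ≤ 2 ^ (n-1) := Nat.pow_le_pow_right (by norm_num) (by omega)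
  have hdig : digit n (π c₀ : ℕ) 1 = digit n (π c₁ : ℕ) 1 := by
    apply hT c₀ c₁ 1 (by omega) _ 1 le_rfl le_rfl
    intro j hj1 hj2
    have : j = 1 := by omega
    subst this
    simp only [digit, hc₀, hc₁]
    have hq0 : (2 ^ n - 2) / 2 ^ (n - 1) = 1 := by
      rw [Nat.div_eq_sub_div (by omega) (by omega), Nat.div_eq_of_lt (by omega)]
    have hq1 : (2 ^ n - 1) / 2 ^ (n - 1) = 1 := by
      rw [Nat.div_eq_sub_div (by omega) (by omega), Nat.div_eq_of_lt (by omega)]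
    rw [hq0, hq1]
  -- but digit 1 of 0 is 0 and digit 1 of 2^n - 1 is 1: contradiction
  have hd0 : digit n 0 1 = 0 := by simp [digit]
  have hd1 : digit n (2 ^ n - 1) 1 = 1 := by
    simp only [digit]
    rw [Nat.div_eq_sub_div (by omega) (by omega), Nat.div_eq_of_lt (by omega)]
  rcases h0 with h0 | h0 <;> rcases h1 with h1 | h1 <;>
    rw [h0, h1] at hdig hne <;> simp [hd0, hd1] at hdig hne
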